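/- Let R be an integral domain and ⋆ a semistar operation on R. If I is a ⋆-invertible nonzero ideal of R (i.e., (I(R:I))^⋆ = R^⋆), then setting T = (I^⋆ : I^⋆), one has (I^⋆ (T : I^⋆))^⋆ = T; that is, every ⋆-invertible ideal is ⋆-stable. -/

import Mathlib

noncomputable section

section Defs

variable (R K : Type*) [CommRing R] [CommRing K] [Algebra R K]

/-- The residual `(E : F) = {x ∈ K : xF ⊆ E}` of two `R`-submodules of `K`. -/
def resid (E F : Submodule R K) : Submodule R K where
  carrier := {x : K | ∀ y ∈ F, x * y ∈ E}
  add_mem' := by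
    intro a b ha hb y hy
    simpa only [Set.mem_setOf_eq, add_mul] using E.add_mem (ha y hy) (hb y hy)
  zero_mem' := by
    intro y hy
    simp
  smul_mem' := by
    intro c x hx y hy
    simpa [smul_mul_assoc] using E.smul_mem c (hx y hy)

/-- The image of an ideal of `R` as an `R`-submodule of `K`. -/
def idealToSub (I : Ideal R) : Submodule R K :=
  Submodule.map (Algebra.linearMap R K) I

end Defs

/-- A semistar operation on an integral domain `R` with quotient field `K`. -/
structure SemistarOp (R K : Type*) [CommRing R] [Field K] [Algebra R K] where
  star : Submodule R K → Submodule R K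
  star_smul : ∀ x : K, x ≠ 0 → ∀ E : Submodule R K, E ≠ ⊥ →
    star (Submodule.span R {x} * E) = Submodule.span R {x} * star E
  mono : ∀ E F : Submodule R K, E ≠ ⊥ → E ≤ F → star E ≤ star F
  le_star : ∀ E : Submodule R K, E ≠ ⊥ → E ≤ star E
  idem : ∀ E : Submodule R K, E ≠ ⊥ → star (star E) = star E

section Ops

variable (R K : Type*) [CommRing R] [Field K] [Algebra R K]

/-- The `v`-operation (divisorial closure) `E ↦ (R : (R : E))`. -/
def vop (E : Submodule R K) : Submodule R K := resid R K 1 (resid R K 1 E)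

/-- The `t`-operation, the finite-type version of `v`. -/
def top (E : Submodule R K) : Submodule R K :=
  ⨆ (F : Submodule R K) (_ : F.FG ∧ F ≠ ⊥ ∧ F ≤ E), vop R K F

/-- The `w`-operation `E ↦ ⋃ {(E : F) : F f.g. nonzero with F^t = R}`. -/
def wop (E : Submodule R K) : Submodule R K :=
  ⨆ (F : Submodule R K) (_ : F.FG ∧ F ≠ ⊥ ∧ top R K F = 1), resid R K E F

/-- `M` is a maximal proper `f`-closed ideal (e.g. a `⋆`-maximal ideal). -/
def IsOpMaxIdeal (f : Submodule R K → Submodule R K) (M : Submodule R K) : Prop :=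
  M ≠ ⊥ ∧ M < 1 ∧ f M = M ∧
    ∀ J : Submodule R K, J ≠ ⊥ → J < 1 → f J = J → M ≤ J → M = J

/-- The localization `E R_P` of a submodule `E` at a prime `P`, inside `K`. -/
def locSub (P : Ideal R) (E : Submodule R K) : Submodule R K :=
  Submodule.span R {x : K | ∃ s : R, s ∉ P ∧ s • x ∈ E}

/-- The subring of `K` determined by the submodule `T` is a stable domain:
every nonzero ideal `E` of `T` is invertible in `(E : E)`. -/
def SubringStable (T : Submodule R K) : Prop :=
  ∀ E : Submodule R K, E ≠ ⊥ → E ≤ T → T * E ≤ E →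
    E * resid R K (resid R K E E) E = resid R K E E

/-- The subring of `K` determined by `T` is a divisorial domain: every nonzero
fractional ideal of `T` is divisorial. -/
def SubringDivisorial (T : Submodule R K) : Prop :=
  ∀ J : Submodule R K, J ≠ ⊥ → T * J ≤ J →
    (∃ x : K, x ≠ 0 ∧ ∀ y ∈ J, x * y ∈ T) →
    resid R K T (resid R K T J) = J

/-- The subring of `K` determined by `T` is `v`-coherent: for every nonzero
finitely generated ideal `I = S·T` of `T`, the ideal `(T : I)` is `v`-finite. -/
def SubringVCoherent (T : Submodule R K) : Prop :=
  ∀ S : Submodule R K, S.FG → S ≠ ⊥ → S ≤ T →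
    ∃ H : Submodule R K, H.FG ∧ H ≠ ⊥ ∧
      resid R K T (S * T) = resid R K T (resid R K T (H * T))

/-- `R` has finite character with respect to the maximal ideals singled out by `f`. -/
def OpFiniteCharacter (f : Submodule R K → Submodule R K) : Prop :=
  ∀ I : Submodule R K, I ≠ ⊥ → I ≤ 1 →
    {M : Submodule R K | IsOpMaxIdeal R K f M ∧ I ≤ M}.Finite

/-- Every nonzero finitely generated ideal is `t`-invertible (PvMD). -/
def IsPvMDsub : Prop :=
  ∀ G : Submodule R K, G.FG → G ≠ ⊥ → G ≤ 1 →
    top R K (G * resid R K 1 G) = 1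

end Ops

namespace SemistarOp

variable {R K : Type*} [CommRing R] [Field K] [Algebra R K] (s : SemistarOp R K)

/-- `⋆`-stability for the ideals of the subring determined by `T`. -/
def StarStableOver (T : Submodule R K) : Prop :=
  ∀ E : Submodule R K, E ≠ ⊥ → E ≤ T → T * E ≤ E →
    s.star (s.star E * resid R K (resid R K (s.star E) (s.star E)) (s.star E))
      = resid R K (s.star E) (s.star E)

/-- `R` is `⋆`-stable: each nonzero ideal `I` is such that `I^⋆` is
`⋆̇`-invertible in `(I^⋆ : I^⋆)`. -/
def StarStable : Prop := s.StarStableOver (1 : Submodule R K)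

/-- `⋆` is of finite type. -/
def FinType : Prop :=
  ∀ E : Submodule R K, E ≠ ⊥ →
    s.star E = ⨆ (F : Submodule R K) (_ : F.FG ∧ F ≠ ⊥ ∧ F ≤ E), s.star F

/-- `⋆ = ⋆̃`: the operation is spectral and of finite type, i.e. it is given by
`E^⋆ = ⋃ {(E : F) : F f.g. nonzero with F^⋆ = R}`. -/
def IsSpectralFT : Prop :=
  ∀ E : Submodule R K, E ≠ ⊥ →
    s.star E = ⨆ (F : Submodule R K) (_ : F.FG ∧ F ≠ ⊥ ∧ s.star F = 1), resid R K E F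

/-- The `⋆`-integral closure `R^{[⋆]} = ⋃ {(F^⋆ : F^⋆) : F f.g. nonzero}`. -/
def starIntClosure : Submodule R K :=
  ⨆ (F : Submodule R K) (_ : F.FG ∧ F ≠ ⊥), resid R K (s.star F) (s.star F)

end SemistarOp


section MoreOps

variable (R K : Type*) [CommRing R] [Field K] [Algebra R K]

/-- `R` is `w`-stable: for each nonzero ideal `I`, `I^w` is invertible in
`(I^w : I^w)` with respect to the restriction of `w`. -/
def WStable : Prop :=
  ∀ I : Submodule R K, I ≠ ⊥ → I ≤ 1 →
    wop R K (wop R K I * resid R K (resid R K (wop R K I) (wop R K I)) (wop R K I))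
      = resid R K (wop R K I) (wop R K I)

/-- `R` is completely integrally closed in its quotient field `K`. -/
def CICsub : Prop :=
  ∀ x : K, (∃ c : R, c ≠ 0 ∧ ∀ n : ℕ, c • x ^ n ∈ (1 : Submodule R K)) →
    x ∈ (1 : Submodule R K)

/-- `R` is `w`-divisorial: `w = v` on nonzero fractional ideals. -/
def WDivisorial : Prop :=
  ∀ J : Submodule R K, J ≠ ⊥ →
    (∃ d : R, d ≠ 0 ∧ ∀ x ∈ J, d • x ∈ (1 : Submodule R K)) →
    wop R K J = vop R K J

/-- `R` is a Krull domain: completely integrally closed with the ascending chain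
condition on (integral) divisorial ideals. -/
def IsKrullSub : Prop :=
  CICsub R K ∧
    ∀ c : ℕ → Submodule R K,
      (∀ n, c n ≠ ⊥ ∧ c n ≤ 1 ∧ vop R K (c n) = c n) → Monotone c →
        ∃ n, ∀ m, n ≤ m → c m = c n

end MoreOps

end

section AuxLemmas

variable {R K : Type*} [CommRing R] [IsDomain R] [Field K] [Algebra R K]
  [IsFractionRing R K] (s : SemistarOp R K)

lemma aux_mem_resid {E F : Submodule R K} {x : K} :
    x ∈ resid R K E F ↔ ∀ y ∈ F, x * y ∈ E := Iff.rfl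

lemma aux_mul_ne_bot {E F : Submodule R K} (hE : E ≠ ⊥) (hF : F ≠ ⊥) :
    E * F ≠ ⊥ := by
  rw [Submodule.ne_bot_iff] at hE hF ⊢
  obtain ⟨a, ha, ha0⟩ := hE
  obtain ⟨b, hb, hb0⟩ := hF
  exact ⟨a * b, Submodule.mul_mem_mul ha hb, mul_ne_zero ha0 hb0⟩

lemma aux_span_ne_bot {x : K} (hx : x ≠ 0) :
    Submodule.span R {x} ≠ ⊥ := by
  rw [Submodule.ne_bot_iff]
  exact ⟨x, Submodule.mem_span_singleton_self x, hx⟩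

/-- `F · E^⋆ ≤ (F·E)^⋆`. -/
lemma aux_mul_star_le (E F : Submodule R K) (hE : E ≠ ⊥) :
    F * s.star E ≤ s.star (F * E) := by
  rw [Submodule.mul_le]
  intro x hx z hz
  rcases eq_or_ne x 0 with rfl | hx0
  · simpa using Submodule.zero_mem _
  have h1 : x * z ∈ Submodule.span R {x} * s.star E :=
    Submodule.mul_mem_mul (Submodule.mem_span_singleton_self x) hz
  rw [← s.star_smul x hx0 E hE] at h1
  have h2 : Submodule.span R {x} * E ≤ F * E :=
    mul_le_mul' ((Submodule.span_singleton_le_iff_mem _ _).mpr hx) le_rfl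
  exact s.mono _ _ (aux_mul_ne_bot (aux_span_ne_bot hx0) hE) h2 h1

/-- `F^⋆ · E^⋆ ≤ (F·E)^⋆`. -/
lemma aux_star_mul_star_le (E F : Submodule R K) (hE : E ≠ ⊥) (hF : F ≠ ⊥) :
    s.star F * s.star E ≤ s.star (F * E) := by
  have h1 : s.star F * s.star E ≤ s.star (s.star F * E) :=
    aux_mul_star_le s E (s.star F) hE
  have hF' : s.star F ≠ ⊥ := fun h => hF (bot_unique (h ▸ s.le_star F hF))
  have h2 : E * s.star F ≤ s.star (E * F) := aux_mul_star_le s F E hF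
  rw [mul_comm] at h2
  rw [mul_comm E F] at h2
  have h3 : s.star (s.star F * E) ≤ s.star (s.star (F * E)) :=
    s.mono _ _ (aux_mul_ne_bot hF' hE) h2
  rw [s.idem _ (aux_mul_ne_bot hF hE)] at h3
  exact le_trans h1 h3

end AuxLemmas

/-- a `⋆`-invertible nonzero ideal `I` (i.e. `(I(R:I))^⋆ = R^⋆`)
is `⋆`-stable: with `T = (I^⋆ : I^⋆)`, one has `(I^⋆(T : I^⋆))^⋆ = T`. -/
theorem statement_3 {R K : Type*} [CommRing R] [IsDomain R] [Field K] [Algebra R K]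
    [IsFractionRing R K] (s : SemistarOp R K) (I : Ideal R) (hI : I ≠ ⊥)
    (hinv : s.star (idealToSub R K I * resid R K 1 (idealToSub R K I)) = s.star 1) :
    s.star (s.star (idealToSub R K I) *
        resid R K (resid R K (s.star (idealToSub R K I)) (s.star (idealToSub R K I)))
          (s.star (idealToSub R K I)))
      = resid R K (s.star (idealToSub R K I)) (s.star (idealToSub R K I)) := by
  set J : Submodule R K := idealToSub R K I with hJdef
  set L : Submodule R K := resid R K 1 J with hLdef
  set J' : Submodule R K := s.star J with hJ'def
  set T : Submodule R K := resid R K J' J' with hTdef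
  -- basic nonvanishing facts
  have hone : (1 : Submodule R K) ≠ ⊥ := by
    rw [Submodule.ne_bot_iff]
    exact ⟨1, Submodule.one_le.mp le_rfl, one_ne_zero⟩
  have hJ : J ≠ ⊥ := by
    rw [Submodule.ne_bot_iff]
    obtain ⟨a, ha, ha0⟩ := (Submodule.ne_bot_iff I).mp hI
    refine ⟨Algebra.linearMap R K a, ⟨a, ha, rfl⟩, fun h => ha0 ?_⟩
    exact IsFractionRing.injective R K (show algebraMap R K a = algebraMap R K 0 by
      simpa using h)
  have hJ1 : J ≤ 1 := by
    rintro x ⟨a, _, rfl⟩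
    rw [Algebra.linearMap_apply]
    exact Submodule.algebraMap_mem a
  have hL1 : (1 : K) ∈ L := by
    intro y hy
    rw [one_mul]
    exact hJ1 hy
  have hL : L ≠ ⊥ := by
    rw [Submodule.ne_bot_iff]
    exact ⟨1, hL1, one_ne_zero⟩
  have hJL : J * L ≠ ⊥ := aux_mul_ne_bot hJ hL
  have hJleJ' : J ≤ J' := s.le_star J hJ
  have hJ' : J' ≠ ⊥ := fun h => hJ (bot_unique (h ▸ hJleJ'))
  -- J' * L ≤ (J*L)^⋆ = 1^⋆
  have hJ'L : J' * L ≤ s.star 1 := by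
    have := aux_mul_star_le s J L hJ
    rw [mul_comm] at this
    rw [mul_comm L J] at this
    rw [hinv] at this
    exact this
  -- Step A : T = 1^⋆
  have hT : T = s.star 1 := by
    apply le_antisymm
    · intro x hx
      rcases eq_or_ne x 0 with rfl | hx0
      · exact Submodule.zero_mem _
      have h1K : (1 : K) ∈ s.star 1 :=
        s.le_star 1 hone (Submodule.one_le.mp le_rfl)
      have hx1 : x ∈ Submodule.span R {x} * s.star 1 := by
        have := Submodule.mul_mem_mul (Submodule.mem_span_singleton_self x) h1K
        simpa using this
      rw [← hinv, ← s.star_smul x hx0 (J * L) hJL] at hx1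
      have hle : Submodule.span R {x} * (J * L) ≤ s.star 1 := by
        rw [Submodule.mul_le]
        intro a ha b hb
        rw [Submodule.mem_span_singleton] at ha
        obtain ⟨r, rfl⟩ := ha
        have hxb : x * b ∈ s.star 1 := by
          refine Submodule.mul_induction_on hb ?_ ?_
          · intro m hm n hn
            have hxm : x * m ∈ J' := hx m (hJleJ' hm)
            have : (x * m) * n ∈ J' * L := Submodule.mul_mem_mul hxm hn
            rw [← mul_assoc]
            exact hJ'L this
          · intro u v hu hv
            rw [mul_add]
            exact Submodule.add_mem _ hu hv
        have : r • x * b = r • (x * b) := smul_mul_assoc r x b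
        rw [this]
        exact Submodule.smul_mem _ r hxb
      have hnb : Submodule.span R {x} * (J * L) ≠ ⊥ :=
        aux_mul_ne_bot (aux_span_ne_bot hx0) hJL
      have := s.mono _ _ hnb hle hx1
      rwa [s.idem 1 hone] at this
    · intro x hx y hy
      have h := aux_star_mul_star_le s J 1 hJ hone
      rw [one_mul] at h
      exact h (Submodule.mul_mem_mul hx hy)
  -- L ≤ (T : J')
  have hLle : L ≤ resid R K T J' := by
    intro l hl y hy
    rw [hT]
    rw [mul_comm]
    have : y * l ∈ J' * L := Submodule.mul_mem_mul hy hl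
    exact hJ'L this
  have hW : J * L ≤ J' * resid R K T J' :=
    mul_le_mul' hJleJ' hLle
  have hWne : J' * resid R K T J' ≠ ⊥ :=
    fun h => hJL (bot_unique (h ▸ hW))
  apply le_antisymm
  · have hsub : J' * resid R K T J' ≤ T := by
      rw [Submodule.mul_le]
      intro a ha b hb
      rw [mul_comm]
      exact hb a ha
    have := s.mono _ _ hWne hsub
    rwa [hT, s.idem 1 hone, ← hT] at this
  · have h0 : T = s.star (J * L) := hT.trans hinv.symm
    exact h0.le.trans (s.mono _ _ hJL hW)
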